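/- arXiv:2402.02406 — 3 statements merged into one kernel-verified Lean document; each statement's English description precedes it below -/
import Mathlib

section
/- Let 𝔤 be a finite-dimensional real Lie algebra such that for every U ∈ 𝔤 the endomorphism ad(U) : 𝔤 → 𝔤 is semisimple. Then every element U of the ideal [rad(𝔤), 𝔤] is central in 𝔤, i.e., [U, W] = 0 for all W ∈ 𝔤. -/
section Aux

variable {L : Type*} [LieRing L] [LieAlgebra ℝ L] [FiniteDimensional ℝ L]

private lemma ad_eq_zero_of_cube
    (had : ∀ U : L, Module.End.IsSemisimple (LieAlgebra.ad ℝ L U)) (x : L)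
    (h : ∀ y : L, ⁅x, ⁅x, ⁅x, y⁆⁆⁆ = 0) : ∀ y : L, ⁅x, y⁆ = 0 := by
  have hnil : IsNilpotent (LieAlgebra.ad ℝ L x) := by
    refine ⟨3, ?_⟩
    ext y
    simp [pow_succ, LieAlgebra.ad_apply, h y]
  have hz : LieAlgebra.ad ℝ L x = 0 :=
    Module.End.eq_zero_of_isNilpotent_isSemisimple hnil (had x)
  intro y
  have := congrArg (fun f : Module.End ℝ L => f y) hz
  simpa [LieAlgebra.ad_apply] using this

private lemma solvable_ideal_le_center
    (had : ∀ U : L, Module.End.IsSemisimple (LieAlgebra.ad ℝ L U)) :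
    ∀ (k : ℕ) (I : LieIdeal ℝ L),
      LieAlgebra.derivedSeriesOfIdeal ℝ L k I = ⊥ → I ≤ LieAlgebra.center ℝ L := by
  intro k
  induction k with
  | zero =>
    intro I hI
    rw [LieAlgebra.derivedSeriesOfIdeal_zero] at hI
    simp [hI]
  | succ k ih =>
    intro I hI
    have h1 : LieAlgebra.derivedSeriesOfIdeal ℝ L k ⁅I, I⁆ = ⊥ := by
      have h10 : LieAlgebra.derivedSeriesOfIdeal ℝ L 1 I = ⁅I, I⁆ := by
        rw [show (1 : ℕ) = 0 + 1 from rfl, LieAlgebra.derivedSeriesOfIdeal_succ,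
          LieAlgebra.derivedSeriesOfIdeal_zero]
      have hadd := LieAlgebra.derivedSeriesOfIdeal_add (R := ℝ) (L := L) (I := I) k 1
      rw [h10] at hadd
      rw [← hadd]
      exact hI
    have hcen : (⁅I, I⁆ : LieIdeal ℝ L) ≤ LieAlgebra.center ℝ L := ih _ h1
    intro x hx
    rw [LieModule.mem_maxTrivSubmodule]
    intro w
    have hx3 : ∀ y : L, ⁅x, ⁅x, ⁅x, y⁆⁆⁆ = 0 := by
      intro y
      have hxy : ⁅x, y⁆ ∈ I := by
        have h := I.lie_mem (x := y) hx
        rw [← lie_skew]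
        exact neg_mem h
      have hxxy : ⁅x, ⁅x, y⁆⁆ ∈ LieAlgebra.center ℝ L :=
        hcen (LieSubmodule.lie_mem_lie hx hxy)
      exact (LieModule.mem_maxTrivSubmodule ℝ L L _).mp hxxy x
    have := ad_eq_zero_of_cube had x hx3 w
    rw [← lie_skew] at this
    rw [← lie_skew, ← neg_neg ⁅x, w⁆]
    simp [ad_eq_zero_of_cube had x hx3 w]

end Aux

/-- Let 𝔤 be a finite-dimensional real Lie algebra such that for every
`U ∈ 𝔤` the endomorphism `ad U : 𝔤 → 𝔤` is semisimple.  Then every element of the ideal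
`⁅rad 𝔤, 𝔤⁆` is central in 𝔤. -/
theorem bracket_radical_central_of_ad_semisimple
    (L : Type*) [LieRing L] [LieAlgebra ℝ L] [FiniteDimensional ℝ L]
    (had : ∀ U : L, Module.End.IsSemisimple (LieAlgebra.ad ℝ L U)) :
    ∀ U ∈ ⁅LieAlgebra.radical ℝ L, (⊤ : LieIdeal ℝ L)⁆, ∀ W : L, ⁅U, W⁆ = 0 := by
  have hsolv : LieAlgebra.IsSolvable (LieAlgebra.radical ℝ L) := inferInstance
  obtain ⟨k, hk⟩ := LieAlgebra.IsSolvable.solvable ℝ (LieAlgebra.radical ℝ L)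
  rw [LieIdeal.derivedSeries_eq_bot_iff] at hk
  have hrad : LieAlgebra.radical ℝ L ≤ LieAlgebra.center ℝ L :=
    solvable_ideal_le_center had k _ hk
  intro U hU W
  have hUrad : U ∈ LieAlgebra.radical ℝ L :=
    LieSubmodule.lie_le_left _ _ hU
  have hUc := hrad hUrad
  rw [LieModule.mem_maxTrivSubmodule] at hUc
  rw [← lie_skew, hUc W, neg_zero]
end

section
/- Let 𝔤 be a finite-dimensional real Lie algebra whose Killing form B satisfies B(U,U) ≤ 0 for every U ∈ 𝔤, and let 𝔯' = {U ∈ 𝔤 : B(U,W) = 0 for all W ∈ 𝔤} (an ideal of 𝔤). Then the quotient Lie algebra 𝔤/𝔯' is the internal direct sum of its derived ideal [𝔤/𝔯', 𝔤/𝔯'] and its center. -/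
/-- Let 𝔤 be a finite-dimensional real Lie algebra whose Killing form `B`
satisfies `B(U,U) ≤ 0` for all `U`, and let `𝔯'` be the ideal
`{U ∈ 𝔤 : B(U,W) = 0 for all W}`.  Then the quotient Lie algebra `𝔤/𝔯'` is the internal
direct sum of its derived ideal `⁅𝔤/𝔯', 𝔤/𝔯'⁆` and its center. -/
theorem quotient_by_killing_kernel_reductive
    (L : Type*) [LieRing L] [LieAlgebra ℝ L] [FiniteDimensional ℝ L]
    (hB : ∀ U : L, killingForm ℝ L U U ≤ 0)
    (𝔯' : LieIdeal ℝ L)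
    (h𝔯' : ∀ U : L, U ∈ 𝔯' ↔ ∀ W : L, killingForm ℝ L U W = 0) :
    IsCompl
      (⁅(⊤ : LieIdeal ℝ (L ⧸ 𝔯')), (⊤ : LieIdeal ℝ (L ⧸ 𝔯'))⁆ : LieIdeal ℝ (L ⧸ 𝔯')).toSubmodule
      (LieAlgebra.center ℝ (L ⧸ 𝔯')).toSubmodule := by
  classical
  set B := killingForm ℝ L with hBdef
  have hsymm : ∀ x y : L, B x y = B y x := fun x y => LieModule.traceForm_comm ℝ L L x y
  -- Cauchy–Schwarz for the negative semidefinite form B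
  have hCS : ∀ x : L, B x x = 0 → ∀ w : L, B x w = 0 := by
    intro x hx w
    have hw : B w w ≤ 0 := hB w
    set a := B x w with ha
    set t : ℝ := a / (1 - B w w) with ht
    have hden : (0:ℝ) < 1 - B w w := by linarith
    have h1 : B (x + t • w) (x + t • w) ≤ 0 := hB _
    have expand : B (x + t • w) (x + t • w) = t^2 * B w w + 2 * t * a := by
      simp only [map_add, map_smul, LinearMap.add_apply, LinearMap.smul_apply, smul_eq_mul, hx]
      rw [hsymm w x, ← ha]
      ring
    rw [expand] at h1
    have htden : t * (1 - B w w) = a := div_mul_cancel₀ a (ne_of_gt hden)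
    have ha' : 2 * t * a = 2 * t ^ 2 * (1 - B w w) := by rw [← htden]; ring
    rw [ha'] at h1
    have ht2 : t ^ 2 = 0 := le_antisymm (by nlinarith [sq_nonneg t]) (sq_nonneg t)
    have ht0 : t = 0 := by
      have := sq_eq_zero_iff.mp ht2
      exact this
    rw [← htden, ht0, zero_mul]
  have hmem : ∀ x : L, B x x = 0 → x ∈ 𝔯' := fun x hx => (h𝔯' x).mpr (hCS x hx)
  have hker : ∀ u ∈ 𝔯', ∀ w : L, B u w = 0 := fun u hu => (h𝔯' u).mp hu
  -- Build the induced bilinear form Φ on the quotient Q = L ⧸ 𝔯'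
  have hdrop : ∀ x : L, 𝔯'.toSubmodule ≤ LinearMap.ker ((B.flip) x) := by
    intro x u hu
    simp only [LinearMap.mem_ker, LinearMap.flip_apply]
    exact hsymm u x ▸ hker u hu x
  let g : L →ₗ[ℝ] (L ⧸ 𝔯') →ₗ[ℝ] ℝ :=
    { toFun := fun x => Submodule.liftQ 𝔯'.toSubmodule (B.flip x) (hdrop x)
      map_add' := by
        intro x y; ext z
        obtain ⟨z, rfl⟩ := Submodule.Quotient.mk_surjective _ z
        simp [Submodule.liftQ_apply, LinearMap.add_apply]
      map_smul' := by
        intro c x; ext z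
        obtain ⟨z, rfl⟩ := Submodule.Quotient.mk_surjective _ z
        show (𝔯'.toSubmodule.liftQ (B.flip (c • x)) (hdrop _)) (Submodule.Quotient.mk z)
          = c • (𝔯'.toSubmodule.liftQ (B.flip x) (hdrop _)) (Submodule.Quotient.mk z)
        rw [Submodule.liftQ_apply, Submodule.liftQ_apply]
        simp }
  have hgdrop : 𝔯'.toSubmodule ≤ LinearMap.ker g := by
    intro u hu
    simp only [LinearMap.mem_ker]
    ext z
    obtain ⟨z, rfl⟩ := Submodule.Quotient.mk_surjective _ z
    show Submodule.liftQ 𝔯'.toSubmodule (B.flip u) (hdrop u) (Submodule.Quotient.mk z) = 0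
    rw [Submodule.liftQ_apply]
    exact hsymm z u ▸ hker u hu z
  let Φ : (L ⧸ 𝔯') →ₗ[ℝ] (L ⧸ 𝔯') →ₗ[ℝ] ℝ := Submodule.liftQ 𝔯'.toSubmodule g hgdrop
  have hΦmk : ∀ x y : L,
      Φ (LieSubmodule.Quotient.mk (N := 𝔯') x) (LieSubmodule.Quotient.mk (N := 𝔯') y) = B y x := by
    intro x y
    show Submodule.liftQ _ g hgdrop (Submodule.Quotient.mk x) (Submodule.Quotient.mk y) = B y x
    rw [Submodule.liftQ_apply]
    show Submodule.liftQ 𝔯'.toSubmodule (B.flip x) (hdrop x) (Submodule.Quotient.mk y) = B y x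
    rw [Submodule.liftQ_apply]
    rfl
  have hmk : ∀ q : L ⧸ 𝔯', ∃ x : L, LieSubmodule.Quotient.mk (N := 𝔯') x = q := fun q =>
    Submodule.Quotient.mk_surjective _ q
  have hΦsymm : ∀ p q : L ⧸ 𝔯', Φ p q = Φ q p := by
    intro p q
    obtain ⟨x, rfl⟩ := hmk p; obtain ⟨y, rfl⟩ := hmk q
    rw [hΦmk, hΦmk, hsymm]
  have hΦrefl : Φ.IsRefl := fun p q h => by rw [hΦsymm]; exact h
  have hΦneg : ∀ q : L ⧸ 𝔯', Φ q q ≤ 0 := by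
    intro q; obtain ⟨x, rfl⟩ := hmk q; rw [hΦmk]; exact hB x
  have hΦdef : ∀ q : L ⧸ 𝔯', Φ q q = 0 → q = 0 := by
    intro q hq
    obtain ⟨x, rfl⟩ := hmk q
    rw [hΦmk] at hq
    exact (LieSubmodule.Quotient.mk_eq_zero 𝔯' (m := x)).mpr (hmem x hq)
  have hΦinv : ∀ p q r : L ⧸ 𝔯', Φ ⁅p, q⁆ r = Φ p ⁅q, r⁆ := by
    intro p q r
    obtain ⟨x, rfl⟩ := hmk p; obtain ⟨y, rfl⟩ := hmk q; obtain ⟨z, rfl⟩ := hmk r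
    rw [← LieSubmodule.Quotient.mk_bracket, ← LieSubmodule.Quotient.mk_bracket, hΦmk, hΦmk]
    rw [hsymm z ⁅x, y⁆, hsymm ⁅y, z⁆ x]
    exact LieModule.traceForm_apply_lie_apply ℝ L L x y z
  set D : LieIdeal ℝ (L ⧸ 𝔯') := ⁅(⊤ : LieIdeal ℝ (L ⧸ 𝔯')), (⊤ : LieIdeal ℝ (L ⧸ 𝔯'))⁆ with hD
  -- the center is exactly the Φ-orthogonal complement of D
  have hC : (LieAlgebra.center ℝ (L ⧸ 𝔯')).toSubmodule = LinearMap.BilinForm.orthogonal Φ D.toSubmodule := by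
    ext x
    rw [LinearMap.BilinForm.mem_orthogonal_iff]
    constructor
    · intro hx d hd
      have hxc : ∀ y : L ⧸ 𝔯', ⁅y, x⁆ = 0 :=
        (LieModule.mem_maxTrivSubmodule ℝ (L ⧸ 𝔯') (L ⧸ 𝔯') x).mp hx
      have hle : D.toSubmodule ≤ LinearMap.ker (Φ.flip x) := by
        rw [hD, LieSubmodule.lieIdeal_oper_eq_linear_span, Submodule.span_le]
        rintro _ ⟨a, b, rfl⟩
        simp only [SetLike.mem_coe, LinearMap.mem_ker, LinearMap.flip_apply]
        rw [hΦinv, hxc, map_zero]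
      exact hle hd
    · intro hx
      refine (LieModule.mem_maxTrivSubmodule ℝ (L ⧸ 𝔯') (L ⧸ 𝔯') x).mpr fun y => ?_
      set z : L ⧸ 𝔯' := ⁅y, x⁆ with hz
      apply hΦdef
      have h1 : Φ z z = Φ ⁅z, y⁆ x := by rw [hΦinv z y x]
      have h2 : ⁅z, y⁆ ∈ D.toSubmodule := LieSubmodule.lie_mem_lie (LieSubmodule.mem_top z) (LieSubmodule.mem_top y)
      rw [h1]
      exact hx _ h2
  have hrestr : (LinearMap.BilinForm.restrict Φ D.toSubmodule).Nondegenerate := by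
    refine (LinearMap.IsRefl.nondegenerate_iff_separatingLeft (B := LinearMap.BilinForm.restrict Φ D.toSubmodule) (fun a b h => hΦrefl _ _ h)).mpr fun d hd => ?_
    have := hd d
    simp only [LinearMap.BilinForm.restrict_apply] at this
    exact Subtype.ext (hΦdef _ this)
  rw [hC]
  exact LinearMap.BilinForm.isCompl_orthogonal_of_restrict_nondegenerate hΦrefl hrestr
end

section
/- Let 𝔩 be a finite-dimensional real Lie algebra admitting an inner product with respect to which ad(X) is skew-adjoint for every X ∈ 𝔩 (i.e., 𝔩 is a compact Lie algebra). Suppose 𝔩 = 𝔰 + 𝔧, where 𝔰 is a semisimple Lie subalgebra of 𝔩 and 𝔧 is a solvable ideal of 𝔩. Then 𝔧 equals the center of 𝔩 and [𝔩,𝔩] = 𝔰. -/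
section Aux

variable {L : Type*} [LieRing L] [LieAlgebra ℝ L]
    (b : L →ₗ[ℝ] L →ₗ[ℝ] ℝ)
    (hposdef : ∀ v : L, v ≠ 0 → 0 < b v v)
    (hskew : ∀ X v w : L, b ⁅X, v⁆ w = - b v ⁅X, w⁆)

include hposdef in
lemma eq_zero_of_b_self (v : L) (h : b v v = 0) : v = 0 := by
  by_contra hv
  exact absurd h (ne_of_gt (hposdef v hv))

include hposdef hskew in
lemma le_center_of_bracket_le_center (I : LieIdeal ℝ L)
    (h : ⁅I, I⁆ ≤ LieAlgebra.center ℝ L) : I ≤ LieAlgebra.center ℝ L := by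
  intro v hv
  rw [LieModule.mem_maxTrivSubmodule]
  intro x
  have hw : ⁅v, x⁆ ∈ I := by
    rw [← lie_skew]; exact neg_mem (I.lie_mem hv)
  have hc : (⁅v, ⁅v, x⁆⁆ : L) ∈ LieAlgebra.center ℝ L :=
    h (LieSubmodule.lie_mem_lie hv hw)
  rw [LieModule.mem_maxTrivSubmodule] at hc
  have hc0 : (⁅v, ⁅v, x⁆⁆ : L) = 0 := by
    apply eq_zero_of_b_self b hposdef
    calc b ⁅v, ⁅v, x⁆⁆ ⁅v, ⁅v, x⁆⁆ = - b ⁅v, x⁆ ⁅v, ⁅v, ⁅v, x⁆⁆⁆ := hskew v _ _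
      _ = 0 := by rw [hc v, map_zero, neg_zero]
  have hw0 : (⁅v, x⁆ : L) = 0 := by
    apply eq_zero_of_b_self b hposdef
    calc b ⁅v, x⁆ ⁅v, x⁆ = - b x ⁅v, ⁅v, x⁆⁆ := hskew v _ _
      _ = 0 := by rw [hc0, map_zero, neg_zero]
  rw [← lie_skew, hw0, neg_zero]

include hposdef hskew in
lemma derived_bot_le_center (k : ℕ) (I : LieIdeal ℝ L)
    (hk : LieAlgebra.derivedSeriesOfIdeal ℝ L k I = ⊥) : I ≤ LieAlgebra.center ℝ L := by
  induction k generalizing I with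
  | zero => rw [LieAlgebra.derivedSeriesOfIdeal_zero] at hk; simp [hk]
  | succ k ih =>
    apply le_center_of_bracket_le_center b hposdef hskew
    apply ih
    have h1 : LieAlgebra.derivedSeriesOfIdeal ℝ L 1 I = ⁅I, I⁆ := by simp
    rw [← h1, ← LieAlgebra.derivedSeriesOfIdeal_add]
    exact hk

include hposdef hskew in
lemma solvable_ideal_le_center_s8 (I : LieIdeal ℝ L)
    (hs : LieAlgebra.IsSolvable I) : I ≤ LieAlgebra.center ℝ L := by
  obtain ⟨k, hk⟩ := (LieAlgebra.isSolvable_iff ℝ I).mp hs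
  rw [LieIdeal.derivedSeries_eq_bot_iff] at hk
  exact derived_bot_le_center b hposdef hskew k I hk

end Aux



/-- Let 𝔩 be a finite-dimensional real Lie algebra admitting an inner
product (a symmetric positive-definite bilinear form `b`) with respect to which `ad X` is
skew-adjoint for every `X ∈ 𝔩` (i.e. 𝔩 is a compact Lie algebra).  Suppose `𝔩 = 𝔰 + 𝔧`,
where `𝔰` is a semisimple Lie subalgebra (no nonzero solvable ideals, i.e. trivial radical)
and `𝔧` is a solvable ideal of 𝔩.  Then `𝔧` equals the center of 𝔩, and `⁅𝔩,𝔩⁆ = 𝔰`. -/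
theorem solvable_ideal_eq_center_of_compact_lie_algebra
    (L : Type*) [LieRing L] [LieAlgebra ℝ L] [FiniteDimensional ℝ L]
    (b : L →ₗ[ℝ] L →ₗ[ℝ] ℝ)
    (hsymm : ∀ v w : L, b v w = b w v)
    (hposdef : ∀ v : L, v ≠ 0 → 0 < b v v)
    (hskew : ∀ X v w : L, b ⁅X, v⁆ w = - b v ⁅X, w⁆)
    (𝔰 : LieSubalgebra ℝ L) (hss : LieAlgebra.HasTrivialRadical ℝ 𝔰)
    (𝔧 : LieIdeal ℝ L) (hsolv : LieAlgebra.IsSolvable 𝔧)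
    (hsum : 𝔰.toSubmodule ⊔ 𝔧.toSubmodule = ⊤) :
    𝔧 = LieAlgebra.center ℝ L ∧
      (⁅(⊤ : LieIdeal ℝ L), (⊤ : LieIdeal ℝ L)⁆ : LieIdeal ℝ L).toSubmodule = 𝔰.toSubmodule := by
  have h1 : 𝔧 ≤ LieAlgebra.center ℝ L := solvable_ideal_le_center_s8 b hposdef hskew 𝔧 hsolv
  -- elements of 𝔰 that are central in L are zero
  have h2 : ∀ s : L, s ∈ 𝔰 → s ∈ LieAlgebra.center ℝ L → s = 0 := by
    intro s hs hsc
    have hcen : (⟨s, hs⟩ : 𝔰) ∈ LieAlgebra.center ℝ 𝔰 := by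
      rw [LieModule.mem_maxTrivSubmodule]
      intro x
      ext
      rw [LieModule.mem_maxTrivSubmodule] at hsc
      exact hsc (x : L)
    rw [LieAlgebra.center_eq_bot, LieSubmodule.mem_bot] at hcen
    exact congrArg Subtype.val hcen
  have h3 : LieAlgebra.center ℝ L ≤ 𝔧 := by
    intro x hx
    have hx' : x ∈ 𝔰.toSubmodule ⊔ 𝔧.toSubmodule := by rw [hsum]; exact Submodule.mem_top
    obtain ⟨s, hs, j, hj, rfl⟩ := Submodule.mem_sup.mp hx'
    have hjc : j ∈ LieAlgebra.center ℝ L := h1 hj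
    have hsc : s ∈ LieAlgebra.center ℝ L := by
      have := (LieAlgebra.center ℝ L).sub_mem hx hjc
      simpa using this
    rw [h2 s hs hsc, zero_add]
    exact hj
  have hje : 𝔧 = LieAlgebra.center ℝ L := le_antisymm h1 h3
  refine ⟨hje, ?_⟩
  -- the bracket part
  have hzero : ∀ z : L, z ∈ 𝔧 → ∀ y : L, ⁅y, z⁆ = 0 := by
    intro z hz y
    have := h1 hz
    rw [LieModule.mem_maxTrivSubmodule] at this
    exact this y
  set W : Submodule ℝ L :=
    (⁅(⊤ : LieIdeal ℝ L), (⊤ : LieIdeal ℝ L)⁆ : LieIdeal ℝ L).toSubmodule with hW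
  have hWle : W ≤ 𝔰.toSubmodule := by
    rw [hW, LieSubmodule.lieIdeal_oper_eq_linear_span']
    rw [Submodule.span_le]
    rintro _ ⟨x, -, y, -, rfl⟩
    have hx' : x ∈ 𝔰.toSubmodule ⊔ 𝔧.toSubmodule := by rw [hsum]; exact Submodule.mem_top
    have hy' : y ∈ 𝔰.toSubmodule ⊔ 𝔧.toSubmodule := by rw [hsum]; exact Submodule.mem_top
    obtain ⟨s, hs, j, hj, rfl⟩ := Submodule.mem_sup.mp hx'
    obtain ⟨s', hs', j', hj', rfl⟩ := Submodule.mem_sup.mp hy'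
    have e : ⁅s + j, s' + j'⁆ = ⁅s, s'⁆ := by
      have e1 : ⁅j, s' + j'⁆ = 0 := by
        rw [← neg_eq_zero, lie_skew]; exact hzero j hj _
      have e2 : ⁅s, j'⁆ = 0 := hzero j' hj' s
      rw [add_lie, e1, add_zero, lie_add, e2, add_zero]
    rw [e]
    exact 𝔰.lie_mem hs hs'
  -- b as a reflexive nondegenerate bilinear form
  set B : LinearMap.BilinForm ℝ L := b with hB
  have hrefl : B.IsRefl := fun x y h => by rw [hB]; rw [hsymm]; exact h
  have hnd : B.Nondegenerate := by
    constructor <;> intro m hm <;> by_contra hm0 <;>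
    exact absurd (hm m) (ne_of_gt (hposdef m hm0))
  have horth : B.orthogonal W ≤ 𝔧.toSubmodule := by
    intro z hz
    rw [LinearMap.BilinForm.mem_orthogonal_iff] at hz
    have hzc : z ∈ LieAlgebra.center ℝ L := by
      rw [LieModule.mem_maxTrivSubmodule]
      intro x
      apply eq_zero_of_b_self b hposdef
      calc b ⁅x, z⁆ ⁅x, z⁆ = - b z ⁅x, ⁅x, z⁆⁆ := hskew x _ _
        _ = - b ⁅x, ⁅x, z⁆⁆ z := by rw [hsymm]
        _ = 0 := by
            rw [hz _ (LieSubmodule.lie_mem_lie (LieSubmodule.mem_top x)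
              (LieSubmodule.mem_top ⁅x, z⁆))]
            exact neg_zero
    exact h3 hzc
  have hinf : 𝔰.toSubmodule ⊓ 𝔧.toSubmodule = ⊥ := by
    rw [eq_bot_iff]
    rintro x ⟨hxs, hxj⟩
    simpa using h2 x hxs (h1 hxj)
  have hdim1 : Module.finrank ℝ L = Module.finrank ℝ 𝔰.toSubmodule + Module.finrank ℝ 𝔧.toSubmodule := by
    have := Submodule.finrank_sup_add_finrank_inf_eq 𝔰.toSubmodule 𝔧.toSubmodule
    rw [hsum, hinf, finrank_bot, finrank_top, add_zero] at this
    exact this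
  have hdim2 : Module.finrank ℝ W + Module.finrank ℝ (B.orthogonal W) = Module.finrank ℝ L := by
    have := LinearMap.BilinForm.finrank_add_finrank_orthogonal hrefl W
    rw [LinearMap.BilinForm.orthogonal_top_eq_bot hnd, inf_bot_eq, finrank_bot, add_zero] at this
    exact this
  have hle2 : Module.finrank ℝ (B.orthogonal W) ≤ Module.finrank ℝ 𝔧.toSubmodule :=
    Submodule.finrank_mono horth
  have : Module.finrank ℝ 𝔰.toSubmodule ≤ Module.finrank ℝ W := by omega
  exact Submodule.eq_of_le_of_finrank_le hWle this
end
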